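/- Let μ be a probability distribution on [0,1]^d whose one-dimensional marginals have densities bounded by M. For every c ≥ 1 and every δ > 0 there exists a ReLU network N : ℝ^d → ℝ^{c·d} of depth 2 and size at most 4d·2^c + cd such that Pr_{x∼μ}[N(x) = bin_c(x)] ≥ 1 − δ. -/

import Mathlib

open MeasureTheory
open scoped ENNReal

noncomputable section

/-- The ReLU activation. -/
def relu (t : ℝ) : ℝ := max 0 t

/-- A feedforward neural network from `ℝ^n` to `ℝ^q`, given as a sequence of affine
layers; the activation is applied coordinatewise after every affine layer except the
last one. -/
inductive Net : ℕ → ℕ → Type where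
  | last {n q : ℕ} (A : Fin q → Fin n → ℝ) (b : Fin q → ℝ) : Net n q
  | layer {n m q : ℕ} (A : Fin m → Fin n → ℝ) (b : Fin m → ℝ) (rest : Net m q) : Net n q

/-- Evaluation of a network with activation `σ`. -/
def Net.eval (σ : ℝ → ℝ) : {n q : ℕ} → Net n q → (Fin n → ℝ) → Fin q → ℝ
  | _, _, .last A b, x, i => (∑ j, A i j * x j) + b i
  | _, _, .layer A b rest, x, i => rest.eval σ (fun m => σ ((∑ j, A m j * x j) + b m)) i

/-- The size of a network: the total number of neurons. -/
def Net.size : {n q : ℕ} → Net n q → ℕ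
  | _, q, .last _ _ => q
  | _, _, .layer (m := m) _ _ rest => m + rest.size

/-- The depth of a network: its number of layers. -/
def Net.depth : {n q : ℕ} → Net n q → ℕ
  | _, _, .last _ _ => 1
  | _, _, .layer _ _ rest => 1 + rest.depth

/-- The `j`-th bit (as a real number) of the `c`-bit binary representation of
`min(⌊2^c t⌋, 2^c − 1)`. -/
def bitRep (c : ℕ) (t : ℝ) (j : Fin c) : ℝ :=
  if (min (⌊(2:ℝ) ^ c * t⌋.toNat) (2 ^ c - 1)).testBit j then 1 else 0

/-- `bin_c(x) ∈ {0,1}^{c·d}`: the concatenation over `i = 1,…,d` of the `c`-bit binary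
representations of the integers `min(⌊2^c x_i⌋, 2^c − 1)`. -/
def binc (c d : ℕ) (x : Fin d → ℝ) : Fin (c * d) → ℝ :=
  fun p => bitRep c (x (finProdFinEquiv.symm p).2) (finProdFinEquiv.symm p).1

/-! ### Auxiliary constructions -/

def thr (c k : ℕ) : ℝ := ((k:ℝ)+1) / 2^c
def bvr (j n : ℕ) : ℝ := if n.testBit j then 1 else 0

lemma relu_of_nonpos {t : ℝ} (h : t ≤ 0) : relu t = 0 := max_eq_left h
lemma relu_of_nonneg {t : ℝ} (h : 0 ≤ t) : relu t = t := max_eq_right h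

lemma step_eq {ε : ℝ} (t a : ℝ) (hε : 0 < ε) (hgap : ¬ (a - ε < t ∧ t < a)) :
    relu ((t - a) * ε⁻¹ + 1) - relu ((t - a) * ε⁻¹) = if a ≤ t then 1 else 0 := by
  rcases le_or_gt a t with h | h
  · have h0 : 0 ≤ (t - a) * ε⁻¹ := mul_nonneg (by linarith) (inv_pos.mpr hε).le
    rw [relu_of_nonneg h0, relu_of_nonneg (by linarith), if_pos h]; ring
  · have h1 : t ≤ a - ε := by
      by_contra hcon
      exact hgap ⟨lt_of_not_ge hcon, h⟩
    have h2 : (t - a) * ε⁻¹ ≤ -1 := by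
      have hle : t - a ≤ -ε := by linarith
      have := mul_le_mul_of_nonneg_right hle (inv_pos.mpr hε).le
      have hne : -ε * ε⁻¹ = -1 := by field_simp
      linarith [this, hne ▸ this]
    rw [relu_of_nonpos (by linarith), relu_of_nonpos (by linarith), if_neg (not_le.mpr h)]; ring

lemma thr_le_iff (c k : ℕ) (t : ℝ) (ht0 : 0 ≤ t) (hk : k + 1 ≤ 2^c - 1) :
    (thr c k ≤ t ↔ k + 1 ≤ min (⌊(2:ℝ)^c * t⌋.toNat) (2^c - 1)) := by
  have h2 : (0:ℝ) < 2^c := by positivity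
  have hfl : 0 ≤ ⌊(2:ℝ)^c * t⌋ := Int.floor_nonneg.mpr (by positivity)
  rw [thr, div_le_iff₀ h2, le_min_iff]
  constructor
  · intro h
    refine ⟨?_, hk⟩
    have hz : ((k:ℤ)+1) ≤ ⌊(2:ℝ)^c * t⌋ := Int.le_floor.mpr (by push_cast; linarith [mul_comm t ((2:ℝ)^c)])
    omega
  · rintro ⟨h, -⟩
    have hz : ((k:ℤ)+1) ≤ ⌊(2:ℝ)^c * t⌋ := by omega
    have := Int.le_floor.mp hz
    push_cast at this
    nlinarith [this]

lemma telescope (K n : ℕ) (hn : n ≤ K) (f : ℕ → ℝ) :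
    ∑ k ∈ Finset.range K, (if k < n then f (k+1) - f k else 0) = f n - f 0 := by
  rw [← Finset.sum_filter]
  have h : (Finset.range K).filter (fun k => k < n) = Finset.range n := by
    ext k; simp only [Finset.mem_filter, Finset.mem_range]; omega
  rw [h, Finset.sum_range_sub]

def NetE (K d : ℕ) : ((Fin 2 × Fin K) × Fin d) ≃ Fin (2 * K * d) :=
  (finProdFinEquiv.prodCongr (Equiv.refl (Fin d))).trans finProdFinEquiv

def A1 (K d : ℕ) (ε : ℝ) : Fin (2*K*d) → Fin d → ℝ :=
  fun u j => if j = ((NetE K d).symm u).2 then ε⁻¹ else 0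

def B1 (c K d : ℕ) (ε : ℝ) : Fin (2*K*d) → ℝ := fun u =>
  -(thr c (((NetE K d).symm u).1.2 : ℕ)) * ε⁻¹ + (if ((NetE K d).symm u).1.1 = 0 then 1 else 0)

def A2 (c K d : ℕ) : Fin (c*d) → Fin (2*K*d) → ℝ := fun p u =>
  if ((NetE K d).symm u).2 = (finProdFinEquiv.symm p).2 then
    (if ((NetE K d).symm u).1.1 = 0 then (1:ℝ) else -1) *
      (bvr ((finProdFinEquiv.symm p).1 : ℕ) ((((NetE K d).symm u).1.2 : ℕ) + 1)
        - bvr ((finProdFinEquiv.symm p).1 : ℕ) (((NetE K d).symm u).1.2 : ℕ))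
  else 0

lemma eval_formula (c K d : ℕ) (ε : ℝ) (x : Fin d → ℝ) (p : Fin (c*d)) :
    (Net.layer (A1 K d ε) (B1 c K d ε) (Net.last (A2 c K d) fun _ => 0)).eval relu x p
    = ∑ k : Fin K,
        (bvr ((finProdFinEquiv.symm p).1 : ℕ) ((k:ℕ)+1) - bvr ((finProdFinEquiv.symm p).1 : ℕ) (k:ℕ)) *
        (relu ((x (finProdFinEquiv.symm p).2 - thr c (k:ℕ)) * ε⁻¹ + 1)
         - relu ((x (finProdFinEquiv.symm p).2 - thr c (k:ℕ)) * ε⁻¹)) := by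
  simp only [Net.eval, add_zero]
  rw [← Equiv.sum_comp (NetE K d)
    (fun u => A2 c K d p u * relu ((∑ j', A1 K d ε u j' * x j') + B1 c K d ε u))]
  simp only [A1, A2, B1, Equiv.symm_apply_apply, ite_mul, zero_mul,
    Finset.sum_ite_eq', Finset.mem_univ, if_true]
  rw [Fintype.sum_prod_type]
  simp only [Fintype.sum_prod_type]
  rw [Fin.sum_univ_two]
  simp only [Fin.isValue, if_true, if_neg (by decide : ¬ (1 : Fin 2) = 0), if_pos rfl, one_mul,
    neg_one_mul]
  simp only [Finset.sum_ite_eq', Finset.mem_univ, if_true]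
  rw [← Finset.sum_add_distrib]
  apply Finset.sum_congr rfl
  intro k _
  have e1 : ε⁻¹ * x (finProdFinEquiv.symm p).2 + (-(thr c k) * ε⁻¹ + 1)
      = (x (finProdFinEquiv.symm p).2 - thr c k) * ε⁻¹ + 1 := by ring
  have e2 : ε⁻¹ * x (finProdFinEquiv.symm p).2 + (-(thr c k) * ε⁻¹ + 0)
      = (x (finProdFinEquiv.symm p).2 - thr c k) * ε⁻¹ := by ring
  rw [e1, e2]; ring

lemma sum_steps_eq_bit (c K : ℕ) (hK : K = 2^c - 1) (ε t : ℝ) (hε : 0 < ε) (ht0 : 0 ≤ t)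
    (hgap : ∀ k : Fin K, ¬ (thr c (k:ℕ) - ε < t ∧ t < thr c (k:ℕ))) (j : Fin c) :
    ∑ k : Fin K, (bvr (j:ℕ) ((k:ℕ)+1) - bvr (j:ℕ) (k:ℕ)) *
      (relu ((t - thr c (k:ℕ)) * ε⁻¹ + 1) - relu ((t - thr c (k:ℕ)) * ε⁻¹)) = bitRep c t j := by
  subst hK
  set n := min (⌊(2:ℝ)^c * t⌋.toNat) (2^c - 1) with hn
  have h1 : ∀ k : Fin (2^c-1),
      (bvr (j:ℕ) ((k:ℕ)+1) - bvr (j:ℕ) (k:ℕ)) *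
      (relu ((t - thr c (k:ℕ)) * ε⁻¹ + 1) - relu ((t - thr c (k:ℕ)) * ε⁻¹))
      = (if (k:ℕ) < n then bvr (j:ℕ) ((k:ℕ)+1) - bvr (j:ℕ) (k:ℕ) else 0) := by
    intro k
    rw [step_eq t (thr c (k:ℕ)) hε (hgap k)]
    have hk1 : (k:ℕ) + 1 ≤ 2^c - 1 := k.isLt
    have hiff := thr_le_iff c (k:ℕ) t ht0 hk1
    by_cases h : thr c (k:ℕ) ≤ t
    · have hkn : (k:ℕ) + 1 ≤ n := hiff.mp h
      rw [if_pos h, if_pos (by omega : (k:ℕ) < n)]; ring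
    · have hkn : ¬ ((k:ℕ) + 1 ≤ n) := fun hco => h (hiff.mpr hco)
      rw [if_neg h, if_neg (by omega : ¬ (k:ℕ) < n)]; ring
  rw [Finset.sum_congr rfl (fun k _ => h1 k), Fin.sum_univ_eq_sum_range
    (fun k => if k < n then bvr (j:ℕ) (k+1) - bvr (j:ℕ) k else 0),
    telescope _ _ (min_le_right _ _)]
  simp [bvr, bitRep, Nat.zero_testBit, hn]

/-- let `μ` be a probability distribution on `[0,1]^d` whose
one-dimensional marginals have densities bounded by `M`. For every `c ≥ 1` and every
`δ > 0` there exists a ReLU network `N : ℝ^d → ℝ^{c·d}` of depth `2` and size at most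
`4d·2^c + cd` such that `Pr_{x∼μ}[N(x) = bin_c(x)] ≥ 1 − δ`. -/
theorem depth_two_binary_extraction (d : ℕ) (M : ℝ) (μ : Measure (Fin d → ℝ))
    (hprob : IsProbabilityMeasure μ)
    (hsupp : μ {x | ∀ i, x i ∈ Set.Icc (0:ℝ) 1} = 1)
    (hmarg : ∀ i : Fin d, ∀ s : Set ℝ, MeasurableSet s →
      μ.map (fun x => x i) s ≤ ENNReal.ofReal M * volume s)
    (c : ℕ) (hc : 1 ≤ c) (δ : ℝ) (hδ : 0 < δ) :
    ∃ N : Net d (c * d), N.depth = 2 ∧ N.size ≤ 4 * d * 2 ^ c + c * d ∧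
      ENNReal.ofReal (1 - δ) ≤ μ {x | ∀ p, N.eval relu x p = binc c d x p} := by
  classical
  set K := 2 ^ c - 1 with hKdef
  set M' := max M 0 with hM'def
  have hM'0 : 0 ≤ M' := le_max_right _ _
  have hden : (0:ℝ) < (d:ℝ) * K * M' + 1 := by positivity
  set ε : ℝ := δ / ((d:ℝ) * K * M' + 1) with hεdef
  have hεpos : 0 < ε := div_pos hδ hden
  refine ⟨Net.layer (A1 K d ε) (B1 c K d ε) (Net.last (A2 c K d) fun _ => 0), rfl, ?_, ?_⟩
  · show 2*K*d + (c*d) ≤ 4*d*2^c + c*d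
    have h1 : K ≤ 2^c := Nat.sub_le _ _
    have h2 : 2*K*d ≤ 2*2^c*d := Nat.mul_le_mul_right _ (Nat.mul_le_mul_left _ h1)
    have h3 : 2*2^c*d ≤ 4*d*2^c := by
      calc 2*2^c*d ≤ 4*2^c*d := Nat.mul_le_mul_right _ (Nat.mul_le_mul_right _ (by norm_num))
        _ = 4*d*2^c := by ring
    omega
  · -- measure bound
    set S : Set (Fin d → ℝ) := {x | ∀ i, x i ∈ Set.Icc (0:ℝ) 1} with hSdef
    set Bik : Fin d → Fin K → Set (Fin d → ℝ) :=
      fun i k => (fun x => x i) ⁻¹' Set.Ioo (thr c (k:ℕ) - ε) (thr c (k:ℕ)) with hBdef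
    set U : Set (Fin d → ℝ) := ⋃ i, ⋃ k, Bik i k with hUdef
    have hBm : ∀ i k, MeasurableSet (Bik i k) := fun i k => measurable_pi_apply i measurableSet_Ioo
    have hUm : MeasurableSet U := MeasurableSet.iUnion fun i => MeasurableSet.iUnion fun k => hBm i k
    have hSm : MeasurableSet S := by
      have hSeq : S = ⋂ i, (fun x : Fin d → ℝ => x i) ⁻¹' Set.Icc (0:ℝ) 1 := by
        ext y; simp [hSdef, Set.mem_iInter, Set.mem_preimage]
      rw [hSeq]
      exact MeasurableSet.iInter fun i => measurable_pi_apply i measurableSet_Icc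
    have hsub : S ∩ Uᶜ ⊆ {x | ∀ p, (Net.layer (A1 K d ε) (B1 c K d ε)
        (Net.last (A2 c K d) fun _ => 0)).eval relu x p = binc c d x p} := by
      rintro x ⟨hxS, hxU⟩ p
      have hgap : ∀ k : Fin K, ¬ (thr c (k:ℕ) - ε < x (finProdFinEquiv.symm p).2
          ∧ x (finProdFinEquiv.symm p).2 < thr c (k:ℕ)) := by
        intro k hcon
        exact hxU (Set.mem_iUnion.mpr ⟨_, Set.mem_iUnion.mpr ⟨k, hcon⟩⟩)
      have ht0 : 0 ≤ x (finProdFinEquiv.symm p).2 := (hxS _).1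
      show _ = binc c d x p
      rw [eval_formula, binc]
      exact sum_steps_eq_bit c K hKdef ε _ hεpos ht0 hgap _
    have hUb : μ U ≤ ENNReal.ofReal ((d:ℝ) * K * M' * ε) := by
      calc μ U ≤ ∑ i : Fin d, μ (⋃ k, Bik i k) := measure_iUnion_fintype_le μ _
        _ ≤ ∑ i : Fin d, ∑ k : Fin K, μ (Bik i k) :=
            Finset.sum_le_sum fun i _ => measure_iUnion_fintype_le μ _
        _ ≤ ∑ _i : Fin d, ∑ _k : Fin K, ENNReal.ofReal (M' * ε) := by
            refine Finset.sum_le_sum fun i _ => Finset.sum_le_sum fun k _ => ?_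
            have hmap : μ (Bik i k) = μ.map (fun x => x i)
                (Set.Ioo (thr c (k:ℕ) - ε) (thr c (k:ℕ))) := by
              rw [Measure.map_apply (measurable_pi_apply i) measurableSet_Ioo]
            rw [hmap]
            refine le_trans (hmarg i _ measurableSet_Ioo) ?_
            rw [Real.volume_Ioo, show thr c (k:ℕ) - (thr c (k:ℕ) - ε) = ε from by ring]
            calc ENNReal.ofReal M * ENNReal.ofReal ε
                ≤ ENNReal.ofReal M' * ENNReal.ofReal ε := by
                  gcongr
                  rw [hM'def]; exact le_max_left _ _
              _ = ENNReal.ofReal (M' * ε) := (ENNReal.ofReal_mul hM'0).symm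
        _ = ((d : ℕ) : ℝ≥0∞) * (((K : ℕ) : ℝ≥0∞) * ENNReal.ofReal (M' * ε)) := by
            simp [Finset.sum_const, Finset.card_univ, nsmul_eq_mul, mul_assoc]
        _ ≤ ENNReal.ofReal ((d:ℝ) * K * M' * ε) := by
            rw [← ENNReal.ofReal_natCast d, ← ENNReal.ofReal_natCast K,
              ← ENNReal.ofReal_mul (by positivity : (0:ℝ) ≤ ((K:ℕ):ℝ)),
              ← ENNReal.ofReal_mul (by positivity : (0:ℝ) ≤ ((d:ℕ):ℝ))]
            exact ENNReal.ofReal_le_ofReal (le_of_eq (by push_cast; ring))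
    have hScompl : μ Sᶜ = 0 := by
      have hc1 := measure_compl hSm (measure_ne_top μ S)
      rw [hc1, hsupp, measure_univ, tsub_self]
    have hGc : μ ((S ∩ Uᶜ)ᶜ) ≤ ENNReal.ofReal ((d:ℝ) * K * M' * ε) := by
      rw [Set.compl_inter, compl_compl]
      calc μ (Sᶜ ∪ U) ≤ μ Sᶜ + μ U := measure_union_le _ _
        _ = μ U := by rw [hScompl, zero_add]
        _ ≤ _ := hUb
    have hone : (1:ℝ≥0∞) ≤ μ (S ∩ Uᶜ) + ENNReal.ofReal ((d:ℝ)*K*M'*ε) := by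
      have huniv : (1:ℝ≥0∞) = μ Set.univ := (measure_univ (μ := μ)).symm
      rw [huniv, ← Set.union_compl_self (S ∩ Uᶜ)]
      exact le_trans (measure_union_le _ _) (add_le_add le_rfl hGc)
    have hrδ : (d:ℝ) * K * M' * ε ≤ δ := by
      have ha : 0 ≤ (d:ℝ)*K*M' := by positivity
      rw [hεdef, ← mul_div_assoc, div_le_iff₀ hden]
      nlinarith
    rcases le_or_gt 1 δ with hδ1 | hδ1
    · calc ENNReal.ofReal (1-δ) = 0 := by
            rw [ENNReal.ofReal_eq_zero]; linarith
        _ ≤ _ := zero_le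
    · have hr0 : 0 ≤ (d:ℝ)*K*M'*ε := by positivity
      have hkey : ENNReal.ofReal (1-δ) + ENNReal.ofReal ((d:ℝ)*K*M'*ε)
          ≤ μ (S ∩ Uᶜ) + ENNReal.ofReal ((d:ℝ)*K*M'*ε) := by
        refine le_trans ?_ hone
        calc ENNReal.ofReal (1-δ) + ENNReal.ofReal ((d:ℝ)*K*M'*ε)
            = ENNReal.ofReal ((1-δ) + (d:ℝ)*K*M'*ε) :=
              (ENNReal.ofReal_add (by linarith) hr0).symm
          _ ≤ ENNReal.ofReal 1 := ENNReal.ofReal_le_ofReal (by linarith)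
          _ = 1 := ENNReal.ofReal_one
      have hfinal : ENNReal.ofReal (1-δ) ≤ μ (S ∩ Uᶜ) :=
        (ENNReal.add_le_add_iff_right ENNReal.ofReal_ne_top).mp hkey
      exact le_trans hfinal (measure_mono hsub)

end
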